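/- Tr T, regarded as a polynomial in ℝ[X], has degree k, leading coefficient 2, and all coefficients positive. Moreover both polynomials p₊ := Tr T + 2(X−1)^k and p₋ := Tr T − 2(X−1)^k have all coefficients nonnegative, with deg p₊ = k and deg p₋ = k−1; consequently p = p₊ · p₋ has nonnegative coefficients. -/

import Mathlib

open Polynomial Matrix

/-- The matrix `A_m(z)` with rows `(z + α β⁻¹, α + β)` and `(z(α⁻¹+β⁻¹), z + β α⁻¹)`. -/
noncomputable def aztecA (a b : ℝ) (z : ℂ) : Matrix (Fin 2) (Fin 2) ℂ :=
  !![z + (a : ℂ) * ((b : ℂ))⁻¹, (a : ℂ) + (b : ℂ);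
     z * (((a : ℂ))⁻¹ + ((b : ℂ))⁻¹), z + (b : ℂ) * ((a : ℂ))⁻¹]

/-- `T(z) = A_1(z) A_2(z) ⋯ A_k(z)`. -/
noncomputable def aztecT {k : ℕ} (α β : Fin k → ℝ) (z : ℂ) : Matrix (Fin 2) (Fin 2) ℂ :=
  (List.ofFn fun m => aztecA (α m) (β m) z).prod

noncomputable def apoly (a b : ℝ) : Matrix (Fin 2) (Fin 2) (Polynomial ℝ) :=
  !![X + C (a * b⁻¹), C (a + b); X * C (a⁻¹ + b⁻¹), X + C (b * a⁻¹)]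

noncomputable def mpoly (L : List (ℝ × ℝ)) : Matrix (Fin 2) (Fin 2) (Polynomial ℝ) :=
  (L.map fun x => apoly x.1 x.2).prod

noncomputable def ppoly (L : List (ℝ × ℝ)) : Polynomial ℝ :=
  (L.map fun x => (X + C (x.1 * x.2⁻¹))).prod

noncomputable def qpoly (L : List (ℝ × ℝ)) : Polynomial ℝ :=
  (L.map fun x => (X + C (x.2 * x.1⁻¹))).prod

lemma coeff_XC_mul_zero (c : ℝ) (p : ℝ[X]) : ((X + C c) * p).coeff 0 = c * p.coeff 0 := by
  rw [add_mul, coeff_add, mul_coeff_zero, coeff_X_zero, zero_mul, coeff_C_mul, zero_add]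

lemma coeff_XC_mul_succ (c : ℝ) (p : ℝ[X]) (j : ℕ) :
    ((X + C c) * p).coeff (j+1) = p.coeff j + c * p.coeff (j+1) := by
  rw [add_mul, coeff_add, coeff_X_mul, coeff_C_mul]

lemma coeff_XCd_mul_zero (d : ℝ) (p : ℝ[X]) : ((X * C d) * p).coeff 0 = 0 := by
  rw [mul_assoc, mul_coeff_zero, coeff_X_zero, zero_mul]

lemma coeff_XCd_mul_succ (d : ℝ) (p : ℝ[X]) (j : ℕ) :
    ((X * C d) * p).coeff (j+1) = d * p.coeff j := by
  rw [mul_assoc, coeff_X_mul, coeff_C_mul]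

lemma aztec_key (L : List (ℝ × ℝ)) (hL : ∀ x ∈ L, 0 < x.1 ∧ 0 < x.2) :
    (∀ i, 0 ≤ (ppoly L).coeff i) ∧ (∀ i, 0 ≤ (qpoly L).coeff i) ∧
    (∀ i, (ppoly L).coeff i ≤ (mpoly L 0 0).coeff i) ∧
    (∀ i, (qpoly L).coeff i ≤ (mpoly L 1 1).coeff i) ∧
    (∀ i, 0 ≤ (mpoly L 0 1).coeff i) ∧
    (∀ i, 0 ≤ (mpoly L 1 0).coeff i) ∧
    (∀ i, L.length < i → (mpoly L 0 0).coeff i = 0) ∧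
    (∀ i, L.length < i → (mpoly L 1 1).coeff i = 0) ∧
    (∀ i, L.length ≤ i → (mpoly L 0 1).coeff i = 0) ∧
    (∀ i, L.length < i → (mpoly L 1 0).coeff i = 0) ∧
    (mpoly L 0 0).coeff L.length = 1 ∧
    (mpoly L 1 1).coeff L.length = 1 := by
  induction L with
  | nil =>
      have hm : mpoly [] = 1 := by simp [mpoly]
      have hp : ppoly [] = 1 := by simp [ppoly]
      have hq : qpoly [] = 1 := by simp [qpoly]
      have hone : ∀ i : ℕ, (0:ℝ) ≤ (1:ℝ[X]).coeff i := by
        intro i; rw [coeff_one]; split <;> norm_num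
      have hzero : ∀ i : ℕ, (0:ℕ) < i → (1:ℝ[X]).coeff i = 0 := by
        intro i hi; rw [coeff_one]; simp; omega
      have m00 : (1 : Matrix (Fin 2) (Fin 2) ℝ[X]) 0 0 = 1 := Matrix.one_apply_eq 0
      have m11 : (1 : Matrix (Fin 2) (Fin 2) ℝ[X]) 1 1 = 1 := Matrix.one_apply_eq 1
      have m01 : (1 : Matrix (Fin 2) (Fin 2) ℝ[X]) 0 1 = 0 := Matrix.one_apply_ne (by decide)
      have m10 : (1 : Matrix (Fin 2) (Fin 2) ℝ[X]) 1 0 = 0 := Matrix.one_apply_ne (by decide)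
      rw [hm, hp, hq]
      simp only [List.length_nil]
      exact ⟨fun i => hone i, fun i => hone i, fun i => by rw [m00],
        fun i => by rw [m11], fun i => by rw [m01, coeff_zero],
        fun i => by rw [m10, coeff_zero],
        fun i hi => by rw [m00]; exact hzero i hi,
        fun i hi => by rw [m11]; exact hzero i hi,
        fun i hi => by rw [m01, coeff_zero],
        fun i hi => by rw [m10, coeff_zero],
        by rw [m00, coeff_one]; simp,
        by rw [m11, coeff_one]; simp⟩
  | cons x L ih =>
      obtain ⟨ha, hb⟩ := hL x List.mem_cons_self
      have hL' : ∀ y ∈ L, 0 < y.1 ∧ 0 < y.2 := fun y hy => hL y (List.mem_cons_of_mem x hy)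
      obtain ⟨hP, hQ, h00, h11, h01, h10, d00, d11, d01, d10, t00, t11⟩ := ih hL'
      have h00n : ∀ i, 0 ≤ (mpoly L 0 0).coeff i := fun i => (hP i).trans (h00 i)
      have h11n : ∀ i, 0 ≤ (mpoly L 1 1).coeff i := fun i => (hQ i).trans (h11 i)
      set a := x.1 with hadef
      set b := x.2 with hbdef
      have hc : (0:ℝ) < a * b⁻¹ := mul_pos ha (inv_pos.2 hb)
      have hc' : (0:ℝ) < b * a⁻¹ := mul_pos hb (inv_pos.2 ha)
      have hab : (0:ℝ) < a + b := add_pos ha hb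
      have hd : (0:ℝ) < a⁻¹ + b⁻¹ := add_pos (inv_pos.2 ha) (inv_pos.2 hb)
      have hmp : mpoly (x :: L) = apoly a b * mpoly L := by
        simp [mpoly, hadef, hbdef]
      have e00 : mpoly (x::L) 0 0
          = (X + C (a*b⁻¹)) * mpoly L 0 0 + C (a+b) * mpoly L 1 0 := by
        rw [hmp, Matrix.mul_apply, Fin.sum_univ_two]; simp [apoly]
      have e01 : mpoly (x::L) 0 1
          = (X + C (a*b⁻¹)) * mpoly L 0 1 + C (a+b) * mpoly L 1 1 := by
        rw [hmp, Matrix.mul_apply, Fin.sum_univ_two]; simp [apoly]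
      have e10 : mpoly (x::L) 1 0
          = (X * C (a⁻¹ + b⁻¹)) * mpoly L 0 0 + (X + C (b*a⁻¹)) * mpoly L 1 0 := by
        rw [hmp, Matrix.mul_apply, Fin.sum_univ_two]; simp [apoly]
      have e11 : mpoly (x::L) 1 1
          = (X * C (a⁻¹ + b⁻¹)) * mpoly L 0 1 + (X + C (b*a⁻¹)) * mpoly L 1 1 := by
        rw [hmp, Matrix.mul_apply, Fin.sum_univ_two]; simp [apoly]
      have eP : ppoly (x::L) = (X + C (a*b⁻¹)) * ppoly L := by simp [ppoly, hadef, hbdef]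
      have eQ : qpoly (x::L) = (X + C (b*a⁻¹)) * qpoly L := by simp [qpoly, hadef, hbdef]
      simp only [List.length_cons]
      refine ⟨?_, ?_, ?_, ?_, ?_, ?_, ?_, ?_, ?_, ?_, ?_, ?_⟩
      · -- ppoly nonneg
        intro i
        rw [eP]
        cases i with
        | zero => rw [coeff_XC_mul_zero]; exact mul_nonneg hc.le (hP 0)
        | succ j =>
            rw [coeff_XC_mul_succ]
            have := hP j; have := hP (j+1); nlinarith
      · intro i
        rw [eQ]
        cases i with
        | zero => rw [coeff_XC_mul_zero]; exact mul_nonneg hc'.le (hQ 0)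
        | succ j =>
            rw [coeff_XC_mul_succ]
            have := hQ j; have := hQ (j+1); nlinarith
      · -- lower bound 00
        intro i
        rw [eP, e00, coeff_add, coeff_C_mul]
        cases i with
        | zero =>
            rw [coeff_XC_mul_zero, coeff_XC_mul_zero]
            have h1 := h00 0; have h2 := h10 0
            nlinarith
        | succ j =>
            rw [coeff_XC_mul_succ, coeff_XC_mul_succ]
            have h1 := h00 j; have h2 := h00 (j+1); have h3 := h10 (j+1)
            nlinarith
      · -- lower bound 11
        intro i
        rw [eQ, e11, coeff_add]
        cases i with
        | zero =>
            rw [coeff_XCd_mul_zero, coeff_XC_mul_zero, coeff_XC_mul_zero]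
            have h1 := h11 0
            nlinarith
        | succ j =>
            rw [coeff_XCd_mul_succ, coeff_XC_mul_succ, coeff_XC_mul_succ]
            have h1 := h11 j; have h2 := h11 (j+1); have h3 := h01 j
            nlinarith
      · -- 01 nonneg
        intro i
        rw [e01, coeff_add, coeff_C_mul]
        cases i with
        | zero =>
            rw [coeff_XC_mul_zero]
            have h1 := h01 0; have h2 := h11n 0
            nlinarith
        | succ j =>
            rw [coeff_XC_mul_succ]
            have h1 := h01 j; have h2 := h01 (j+1); have h3 := h11n (j+1)
            nlinarith
      · -- 10 nonneg
        intro i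
        rw [e10, coeff_add]
        cases i with
        | zero =>
            rw [coeff_XCd_mul_zero, coeff_XC_mul_zero]
            have h1 := h10 0
            nlinarith
        | succ j =>
            rw [coeff_XCd_mul_succ, coeff_XC_mul_succ]
            have h1 := h00n j; have h2 := h10 j; have h3 := h10 (j+1)
            nlinarith
      · -- deg 00
        intro i hi
        cases i with
        | zero => omega
        | succ j =>
            rw [e00, coeff_add, coeff_XC_mul_succ, coeff_C_mul,
              d00 j (by omega), d00 (j+1) (by omega), d10 (j+1) (by omega)]
            ring
      · -- deg 11
        intro i hi
        cases i with
        | zero => omega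
        | succ j =>
            rw [e11, coeff_add, coeff_XCd_mul_succ, coeff_XC_mul_succ,
              d01 j (by omega), d11 j (by omega), d11 (j+1) (by omega)]
            ring
      · -- deg 01
        intro i hi
        cases i with
        | zero => omega
        | succ j =>
            rw [e01, coeff_add, coeff_XC_mul_succ, coeff_C_mul,
              d01 j (by omega), d01 (j+1) (by omega), d11 (j+1) (by omega)]
            ring
      · -- deg 10
        intro i hi
        cases i with
        | zero => omega
        | succ j =>
            rw [e10, coeff_add, coeff_XCd_mul_succ, coeff_XC_mul_succ,
              d00 j (by omega), d10 j (by omega), d10 (j+1) (by omega)]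
            ring
      · -- top 00
        rw [e00, coeff_add, coeff_XC_mul_succ, coeff_C_mul, t00,
          d00 (L.length+1) (by omega), d10 (L.length+1) (by omega)]
        ring
      · -- top 11
        rw [e11, coeff_add, coeff_XCd_mul_succ, coeff_XC_mul_succ,
          d01 L.length le_rfl, t11, d11 (L.length+1) (by omega)]
        ring

lemma two_le_add_inv {t : ℝ} (ht : 0 < t) : 2 ≤ t + t⁻¹ := by
  have h := mul_inv_cancel₀ ht.ne'
  nlinarith [sq_nonneg (t - 1)]

lemma poly_eq_of_aeval (p q : ℝ[X]) (h : ∀ z : ℂ, aeval z p = aeval z q) : p = q := by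
  have hmap : p.map (algebraMap ℝ ℂ) = q.map (algebraMap ℝ ℂ) := by
    apply Polynomial.funext
    intro z
    rw [eval_map, eval_map, ← aeval_def, ← aeval_def]
    exact h z
  exact Polynomial.map_injective _ (algebraMap ℝ ℂ).injective hmap

lemma trace_bridge (k : ℕ) (α β : Fin k → ℝ) (z : ℂ) :
    aeval z (mpoly (List.ofFn fun m => (α m, β m)) 0 0
      + mpoly (List.ofFn fun m => (α m, β m)) 1 1) = Matrix.trace (aztecT α β z) := by
  set f : ℝ[X] →+* ℂ := (Polynomial.aeval z : ℝ[X] →ₐ[ℝ] ℂ).toRingHom with hf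
  have hA : ∀ m : Fin k, f.mapMatrix (apoly (α m) (β m)) = aztecA (α m) (β m) z := by
    intro m
    ext i j
    fin_cases i <;> fin_cases j <;>
      simp [apoly, aztecA, RingHom.mapMatrix_apply, Matrix.map_apply, hf,
        Complex.ofReal_mul, Complex.ofReal_inv, Complex.ofReal_add]
  have hM : f.mapMatrix (mpoly (List.ofFn fun m => (α m, β m))) = aztecT α β z := by
    rw [mpoly, List.map_ofFn, map_list_prod, List.map_ofFn, aztecT]
    exact congrArg List.prod (congrArg List.ofFn (funext fun m => hA m))
  rw [← hM, RingHom.mapMatrix_apply, Matrix.trace_fin_two]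
  simp [Matrix.map_apply, hf]

/-- `Tr T` has degree `k`, leading coefficient `2` and positive coefficients;
`p₊ = Tr T + 2(X−1)^k` and `p₋ = Tr T − 2(X−1)^k` have nonnegative coefficients and degrees
`k` and `k−1`; and `p = p₊ · p₋` has nonnegative coefficients. -/
theorem stmt3 (k : ℕ) (hk : 1 ≤ k) (α β : Fin k → ℝ)
    (hα : ∀ m, 0 < α m) (hβ : ∀ m, 0 < β m)
    (trT p : Polynomial ℝ)
    (htr : ∀ z : ℂ, Polynomial.aeval z trT = Matrix.trace (aztecT α β z))
    (hp : ∀ z : ℂ, Polynomial.aeval z p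
        = (Matrix.trace (aztecT α β z)) ^ 2 - 4 * (z - 1) ^ (2 * k)) :
    trT.natDegree = k ∧
    trT.leadingCoeff = 2 ∧
    (∀ i ≤ k, 0 < trT.coeff i) ∧
    (∀ i, 0 ≤ (trT + 2 * (X - 1) ^ k).coeff i) ∧
    (trT + 2 * (X - 1) ^ k).natDegree = k ∧
    (∀ i, 0 ≤ (trT - 2 * (X - 1) ^ k).coeff i) ∧
    (trT - 2 * (X - 1) ^ k).natDegree = k - 1 ∧
    p = (trT + 2 * (X - 1) ^ k) * (trT - 2 * (X - 1) ^ k) ∧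
    (∀ i, 0 ≤ p.coeff i) := by
  set L := List.ofFn (fun m : Fin k => (α m, β m)) with hLdef
  have hLpos : ∀ x ∈ L, 0 < x.1 ∧ 0 < x.2 := by
    intro x hx
    rw [hLdef, List.mem_ofFn] at hx
    obtain ⟨m, rfl⟩ := hx
    exact ⟨hα m, hβ m⟩
  obtain ⟨hP, hQ, h00, h11, h01, h10, d00, d11, d01, d10, t00, t11⟩ := aztec_key L hLpos
  have hlen : L.length = k := by simp [hLdef]
  rw [hlen] at d00 d11 d01 d10 t00 t11
  have htrT : trT = mpoly L 0 0 + mpoly L 1 1 := by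
    apply poly_eq_of_aeval
    intro z
    exact (htr z).trans (trace_bridge k α β z).symm
  have Tcoeff : ∀ i, trT.coeff i = (mpoly L 0 0).coeff i + (mpoly L 1 1).coeff i := by
    intro i; rw [htrT, coeff_add]
  have Ttop : trT.coeff k = 2 := by rw [Tcoeff, t00, t11]; norm_num
  have Tzero : ∀ i, k < i → trT.coeff i = 0 := fun i hi => by
    rw [Tcoeff, d00 i hi, d11 i hi, add_zero]
  have hpp : ppoly L = ∏ m : Fin k, (X + C (α m * (β m)⁻¹)) := by
    rw [ppoly, hLdef, List.map_ofFn]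
    exact List.prod_ofFn
  have hqq : qpoly L = ∏ m : Fin k, (X + C (β m * (α m)⁻¹)) := by
    rw [qpoly, hLdef, List.map_ofFn]
    exact List.prod_ofFn
  have hcard : (Finset.univ : Finset (Fin k)).card = k := by simp
  have hPQ : ∀ i, 2 * (k.choose i : ℝ) ≤ (ppoly L).coeff i + (qpoly L).coeff i := by
    intro i
    by_cases hik : i ≤ k
    · have hc1 : (ppoly L).coeff i
          = ∑ t ∈ Finset.powersetCard (k - i) (Finset.univ : Finset (Fin k)),
              ∏ m ∈ t, (α m * (β m)⁻¹) := by
        rw [hpp, Finset.prod_X_add_C_coeff _ _ (by rw [hcard]; exact hik), hcard]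
      have hc2 : (qpoly L).coeff i
          = ∑ t ∈ Finset.powersetCard (k - i) (Finset.univ : Finset (Fin k)),
              ∏ m ∈ t, (β m * (α m)⁻¹) := by
        rw [hqq, Finset.prod_X_add_C_coeff _ _ (by rw [hcard]; exact hik), hcard]
      have hsum : ∀ t ∈ Finset.powersetCard (k - i) (Finset.univ : Finset (Fin k)),
          (2:ℝ) ≤ (∏ m ∈ t, (α m * (β m)⁻¹)) + ∏ m ∈ t, (β m * (α m)⁻¹) := by
        intro t _
        have hprodpos : 0 < ∏ m ∈ t, (α m * (β m)⁻¹) :=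
          Finset.prod_pos fun m _ => mul_pos (hα m) (inv_pos.2 (hβ m))
        have hinv : ∏ m ∈ t, (β m * (α m)⁻¹) = (∏ m ∈ t, (α m * (β m)⁻¹))⁻¹ := by
          rw [← Finset.prod_inv_distrib]
          refine Finset.prod_congr rfl fun m _ => ?_
          rw [mul_inv, inv_inv, mul_comm]
        rw [hinv]
        exact two_le_add_inv hprodpos
      calc 2 * (k.choose i : ℝ)
          = ∑ _t ∈ Finset.powersetCard (k - i) (Finset.univ : Finset (Fin k)), (2:ℝ) := by
            rw [Finset.sum_const, Finset.card_powersetCard, hcard,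
              Nat.choose_symm hik, nsmul_eq_mul]
            ring
        _ ≤ ∑ t ∈ Finset.powersetCard (k - i) (Finset.univ : Finset (Fin k)),
              ((∏ m ∈ t, (α m * (β m)⁻¹)) + ∏ m ∈ t, (β m * (α m)⁻¹)) :=
            Finset.sum_le_sum hsum
        _ = (ppoly L).coeff i + (qpoly L).coeff i := by
            rw [hc1, hc2, ← Finset.sum_add_distrib]
    · rw [Nat.choose_eq_zero_of_lt (by omega)]
      have h1 := hP i; have h2 := hQ i
      push_cast
      linarith
  have TB : ∀ i, 2 * (k.choose i : ℝ) ≤ trT.coeff i := fun i => by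
    rw [Tcoeff]; exact (hPQ i).trans (add_le_add (h00 i) (h11 i))
  have hE : ∀ i, ((X - 1 : ℝ[X]) ^ k).coeff i = (-1)^(k-i) * (k.choose i : ℝ) := by
    intro i
    rw [show (X - 1 : ℝ[X]) = X + C (-1) by rw [C_neg, C_1]; ring, coeff_X_add_C_pow]
  have hEb : ∀ i, |((X - 1 : ℝ[X]) ^ k).coeff i| ≤ (k.choose i : ℝ) := by
    intro i
    rw [hE, abs_mul, abs_pow, abs_neg, abs_one, one_pow, one_mul,
      abs_of_nonneg (by positivity)]
  have h2E : ∀ q : ℝ[X], ∀ i, ((2:ℝ[X]) * q).coeff i = 2 * q.coeff i := by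
    intro q i; rw [show (2:ℝ[X]) = C 2 from (map_ofNat C 2).symm, coeff_C_mul]
  have hPp : ∀ i, 0 ≤ (trT + 2 * (X - 1) ^ k).coeff i := by
    intro i
    rw [coeff_add, h2E]
    have h1 := TB i
    have h2 := (abs_le.mp (hEb i)).1
    linarith
  have hPm : ∀ i, 0 ≤ (trT - 2 * (X - 1) ^ k).coeff i := by
    intro i
    rw [coeff_sub, h2E]
    have h1 := TB i
    have h2 := (abs_le.mp (hEb i)).2
    linarith
  have Ezero : ∀ i, k < i → ((X - 1 : ℝ[X]) ^ k).coeff i = 0 := by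
    intro i hi
    rw [hE, Nat.choose_eq_zero_of_lt hi]
    push_cast; ring
  have Etop : ((X - 1 : ℝ[X]) ^ k).coeff k = 1 := by
    rw [hE, Nat.sub_self, pow_zero, Nat.choose_self]; norm_num
  have Tpos : ∀ i ≤ k, 0 < trT.coeff i := by
    intro i hik
    have hch : 0 < (k.choose i : ℝ) := by exact_mod_cast Nat.choose_pos hik
    linarith [TB i]
  have ndT : trT.natDegree = k :=
    le_antisymm (natDegree_le_iff_coeff_eq_zero.mpr Tzero)
      (le_natDegree_of_ne_zero (by rw [Ttop]; norm_num))
  have hlc : trT.leadingCoeff = 2 := by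
    have : trT.leadingCoeff = trT.coeff trT.natDegree := rfl
    rw [this, ndT, Ttop]
  have ndPp : (trT + 2 * (X - 1) ^ k).natDegree = k := by
    refine le_antisymm (natDegree_le_iff_coeff_eq_zero.mpr fun N hN => ?_)
      (le_natDegree_of_ne_zero ?_)
    · rw [coeff_add, h2E, Tzero N hN, Ezero N hN]; ring
    · rw [coeff_add, h2E, Ttop, Etop]; norm_num
  have hcoeffkm1 : (trT - 2 * (X - 1) ^ k).coeff (k-1) ≠ 0 := by
    have h1 : k - (k-1) = 1 := by omega
    have h2 : k.choose (k-1) = k := by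
      rw [← Nat.choose_symm (Nat.sub_le k 1), h1, Nat.choose_one_right]
    have h3 : ((X - 1 : ℝ[X]) ^ k).coeff (k-1) = -(k:ℝ) := by
      rw [hE, h1, h2, pow_one]; ring
    have h4 := Tpos (k-1) (by omega)
    rw [coeff_sub, h2E, h3]
    have hkpos : (0:ℝ) < (k:ℝ) := by exact_mod_cast hk
    nlinarith
  have ndPm : (trT - 2 * (X - 1) ^ k).natDegree = k - 1 := by
    refine le_antisymm (natDegree_le_iff_coeff_eq_zero.mpr fun N hN => ?_)
      (le_natDegree_of_ne_zero hcoeffkm1)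
    rcases eq_or_lt_of_le (show k ≤ N by omega) with rfl | hlt
    · rw [coeff_sub, h2E, Ttop, Etop]; ring
    · rw [coeff_sub, h2E, Tzero N hlt, Ezero N hlt]; ring
  have hpoly : p = trT ^ 2 - 4 * (X - 1) ^ (2 * k) := by
    apply poly_eq_of_aeval
    intro z
    rw [hp z, ← htr z]
    simp only [map_sub, _root_.map_mul, map_pow, _root_.map_ofNat, aeval_X, _root_.map_one]
  have hfact : p = (trT + 2 * (X - 1) ^ k) * (trT - 2 * (X - 1) ^ k) := by
    rw [hpoly]; ring
  refine ⟨ndT, hlc, Tpos, hPp, ndPp, hPm, ndPm, hfact, ?_⟩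
  intro i
  rw [hfact, coeff_mul]
  exact Finset.sum_nonneg fun x _ => mul_nonneg (hPp _) (hPm _)
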